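/- Let K : ℝ → ℝ be even with K ∈ L¹(ℝ) and ξ ↦ ξK(ξ) ∈ L¹(ℝ), let k ∈ ℝ, and let u, v : ℝ → ℂ be continuously differentiable 2π-periodic functions. Then ⟨u, K∗_θv − k·K₁∗_θv'⟩ = ⟨K∗_θu − k·K₁∗_θu', v⟩, where (K∗_θw)(θ) = ∫_ℝ K(ξ)w(θ−kξ)dξ, (K₁∗_θw)(θ) = ∫_ℝ ξK(ξ)w(θ−kξ)dξ, and ⟨f,g⟩ = ∫₀^{2π} f(θ) conj(g(θ))dθ. -/

import Mathlib

open MeasureTheory Real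

/-- A continuous periodic function is bounded. -/
lemma periodic_bound {w : ℝ → ℂ} (hw : Continuous w)
    (hwp : Function.Periodic w (2 * π)) : ∃ C : ℝ, 0 ≤ C ∧ ∀ x, ‖w x‖ ≤ C := by
  obtain ⟨C, hC⟩ := (isCompact_Icc (a := (0:ℝ)) (b := 2 * π)).exists_bound_of_continuousOn
    hw.continuousOn
  refine ⟨max C 0, le_max_right _ _, fun x => ?_⟩
  obtain ⟨y, hy, hxy⟩ := hwp.exists_mem_Ico₀ (by positivity) x
  rw [hxy]
  exact le_trans (hC y ⟨hy.1, hy.2.le⟩) (le_max_left _ _)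

/-- Fubini swap for the kernel-type double integral. -/
lemma swap_aux (f : ℝ → ℝ) (hf : Integrable f) (A B : ℝ → ℂ)
    (hA : Continuous A) (hB : Continuous B) (CA CB : ℝ)
    (hCA0 : 0 ≤ CA) (hCB0 : 0 ≤ CB)
    (hCA : ∀ x, ‖A x‖ ≤ CA) (hCB : ∀ x, ‖B x‖ ≤ CB) (k : ℝ) :
    (∫ θ in (0:ℝ)..(2 * π), ∫ ξ : ℝ, (f ξ : ℂ) * (A θ * B (θ - k * ξ)))
      = ∫ ξ : ℝ, (f ξ : ℂ) * ∫ θ in (0:ℝ)..(2 * π), A θ * B (θ - k * ξ) := by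
  have h2π : (0:ℝ) ≤ 2 * π := by positivity
  have hint : Integrable
      (Function.uncurry fun θ ξ => (f ξ : ℂ) * (A θ * B (θ - k * ξ)))
      ((volume.restrict (Set.Ioc (0:ℝ) (2 * π))).prod volume) := by
    have hmeas : AEStronglyMeasurable
        (Function.uncurry fun θ ξ => (f ξ : ℂ) * (A θ * B (θ - k * ξ)))
        ((volume.restrict (Set.Ioc (0:ℝ) (2 * π))).prod volume) := by
      apply AEStronglyMeasurable.mul
      · exact Complex.continuous_ofReal.comp_aestronglyMeasurable hf.1.comp_snd
      · exact ((hA.comp continuous_fst).mul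
          (hB.comp (continuous_fst.sub (continuous_const.mul continuous_snd)))
          ).aestronglyMeasurable
    have hbound : Integrable (fun z : ℝ × ℝ => (1:ℝ) * (CA * CB * ‖f z.2‖))
        ((volume.restrict (Set.Ioc (0:ℝ) (2 * π))).prod volume) := by
      have hone : Integrable (fun _ : ℝ => (1:ℝ))
          (volume.restrict (Set.Ioc (0:ℝ) (2 * π))) :=
        integrableOn_const measure_Ioc_lt_top.ne
      exact hone.mul_prod (hf.norm.const_mul (CA * CB))
    refine hbound.mono hmeas ?_
    filter_upwards with z
    have h1 : ‖(f z.2 : ℂ) * (A z.1 * B (z.1 - k * z.2))‖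
        = ‖f z.2‖ * (‖A z.1‖ * ‖B (z.1 - k * z.2)‖) := by
      simp [norm_mul]
    have h2 : ‖A z.1‖ * ‖B (z.1 - k * z.2)‖ ≤ CA * CB :=
      mul_le_mul (hCA _) (hCB _) (norm_nonneg _) hCA0
    have h3 : ‖f z.2‖ * (‖A z.1‖ * ‖B (z.1 - k * z.2)‖) ≤ ‖f z.2‖ * (CA * CB) :=
      mul_le_mul_of_nonneg_left h2 (norm_nonneg _)
    have h4 : (0:ℝ) ≤ CA * CB * ‖f z.2‖ := by positivity
    calc ‖Function.uncurry (fun θ ξ => (f ξ : ℂ) * (A θ * B (θ - k * ξ))) z‖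
        = ‖f z.2‖ * (‖A z.1‖ * ‖B (z.1 - k * z.2)‖) := h1
      _ ≤ ‖f z.2‖ * (CA * CB) := h3
      _ = (1:ℝ) * (CA * CB * ‖f z.2‖) := by ring
      _ ≤ ‖(1:ℝ) * (CA * CB * ‖f z.2‖)‖ := le_abs_self _
  have hsw := MeasureTheory.integral_integral_swap hint
  rw [intervalIntegral.integral_of_le h2π]
  rw [hsw]
  congr 1
  funext ξ
  rw [intervalIntegral.integral_of_le h2π, ← MeasureTheory.integral_const_mul]

/-- Continuity of the convolution-type integral in the translation parameter. -/
lemma cont_aux (f : ℝ → ℝ) (hf : Integrable f) (w : ℝ → ℂ) (hw : Continuous w)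
    (C : ℝ) (hC : ∀ x, ‖w x‖ ≤ C) (k : ℝ) :
    Continuous fun θ : ℝ => ∫ ξ : ℝ, (f ξ : ℂ) * w (θ - k * ξ) := by
  apply continuous_of_dominated (bound := fun ξ => ‖f ξ‖ * C)
  · intro θ
    exact (Complex.continuous_ofReal.comp_aestronglyMeasurable hf.1).mul
      ((hw.comp (continuous_const.sub (continuous_const.mul continuous_id))
        ).aestronglyMeasurable)
  · intro θ
    filter_upwards with ξ
    calc ‖(f ξ : ℂ) * w (θ - k * ξ)‖ = ‖f ξ‖ * ‖w (θ - k * ξ)‖ := by simp [norm_mul]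
      _ ≤ ‖f ξ‖ * C := mul_le_mul_of_nonneg_left (hC _) (norm_nonneg _)
  · exact hf.norm.mul_const C
  · filter_upwards with ξ
    exact continuous_const.mul (hw.comp ((continuous_id.sub continuous_const)))

/-- Shift lemma for products of periodic functions. -/
lemma shift_aux (p q : ℝ → ℂ) (hpp : Function.Periodic p (2 * π))
    (hqp : Function.Periodic q (2 * π)) (c : ℝ) :
    (∫ θ in (0:ℝ)..(2 * π), p θ * q (θ - c))
      = ∫ θ in (0:ℝ)..(2 * π), p (θ + c) * q θ := by
  have h1 : (∫ θ in (0:ℝ)..(2 * π), p θ * q (θ - c))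
      = ∫ θ in (0:ℝ)..(2 * π), (fun s => p (s + c) * q s) (θ - c) := by
    congr 1
    funext θ
    simp [sub_add_cancel]
  have h2 := intervalIntegral.integral_comp_sub_right (a := (0:ℝ)) (b := 2 * π)
    (fun s => p (s + c) * q s) c
  rw [h1, h2]
  have hper : Function.Periodic (fun s => p (s + c) * q s) (2 * π) := by
    intro x
    simp only [add_right_comm x (2 * π) c]
    rw [hpp (x + c), hqp x]
  have := hper.intervalIntegral_add_eq (0 - c) 0
  simpa [sub_eq_neg_add, zero_add] using this

theorem hasDerivAt_conj {g g' : ℝ → ℂ} (hg : ∀ x, HasDerivAt g (g' x) x) (x : ℝ) :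
    HasDerivAt (fun y => (starRingEnd ℂ) (g y)) ((starRingEnd ℂ) (g' x)) x :=
  (hg x).star

/-- Integration by parts over a period: boundary terms vanish. -/
lemma ibp_aux (p q p' q' : ℝ → ℂ)
    (hp : ∀ x, HasDerivAt p (p' x) x) (hq : ∀ x, HasDerivAt q (q' x) x)
    (hp' : Continuous p') (hq' : Continuous q')
    (hpp : Function.Periodic p (2 * π)) (hqp : Function.Periodic q (2 * π)) :
    (∫ θ in (0:ℝ)..(2 * π), p θ * q' θ) = - ∫ θ in (0:ℝ)..(2 * π), p' θ * q θ := by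
  have h := intervalIntegral.integral_mul_deriv_eq_deriv_mul
    (u := p) (v := q) (u' := p') (v' := q') (a := (0:ℝ)) (b := 2 * π)
    (fun x _ => hp x) (fun x _ => hq x)
    (hp'.intervalIntegrable _ _) (hq'.intervalIntegrable _ _)
  have hb : p (2 * π) * q (2 * π) - p 0 * q 0 = 0 := by
    have h1 : p (2 * π) = p 0 := by simpa using hpp 0
    have h2 : q (2 * π) = q 0 := by simpa using hqp 0
    rw [h1, h2, sub_self]
  rw [h, hb, zero_sub]

/-- The operator `K⁽¹⁾∗ g = K∗_θ g − k·K₁∗_θ g'` is symmetric on continuously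
differentiable `2π`-periodic functions, for `K` even with `K, ξK(ξ) ∈ L¹(ℝ)`. -/
theorem K1_operator_symmetric
    (K : ℝ → ℝ) (hK : Integrable K) (hK1 : Integrable (fun ξ => ξ * K ξ))
    (hKeven : ∀ x, K (-x) = K x) (k : ℝ)
    (u v u' v' : ℝ → ℂ)
    (hu : ∀ x, HasDerivAt u (u' x) x) (hu' : Continuous u')
    (hup : Function.Periodic u (2 * π))
    (hv : ∀ x, HasDerivAt v (v' x) x) (hv' : Continuous v')
    (hvp : Function.Periodic v (2 * π)) :
    (∫ θ in (0:ℝ)..(2 * π),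
        u θ * (starRingEnd ℂ)
          ((∫ ξ : ℝ, (K ξ : ℂ) * v (θ - k * ξ))
            - k * ∫ ξ : ℝ, ((ξ * K ξ : ℝ) : ℂ) * v' (θ - k * ξ)))
      = ∫ θ in (0:ℝ)..(2 * π),
          ((∫ ξ : ℝ, (K ξ : ℂ) * u (θ - k * ξ))
            - k * ∫ ξ : ℝ, ((ξ * K ξ : ℝ) : ℂ) * u' (θ - k * ξ))
            * (starRingEnd ℂ) (v θ) := by
  have hucont : Continuous u := by
    rw [continuous_iff_continuousAt]; exact fun x => (hu x).continuousAt
  have hvcont : Continuous v := by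
    rw [continuous_iff_continuousAt]; exact fun x => (hv x).continuousAt
  -- derivatives are periodic
  have hup' : Function.Periodic u' (2 * π) := by
    intro x
    have h1 : HasDerivAt (fun y => u (y + 2 * π)) (u' (x + 2 * π)) x :=
      HasDerivAt.comp_add_const x (2 * π) (hu (x + 2 * π))
    have h2 : (fun y => u (y + 2 * π)) = u := funext hup
    rw [h2] at h1
    exact h1.unique (hu x)
  have hvp' : Function.Periodic v' (2 * π) := by
    intro x
    have h1 : HasDerivAt (fun y => v (y + 2 * π)) (v' (x + 2 * π)) x :=
      HasDerivAt.comp_add_const x (2 * π) (hv (x + 2 * π))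
    have h2 : (fun y => v (y + 2 * π)) = v := funext hvp
    rw [h2] at h1
    exact h1.unique (hv x)
  obtain ⟨Cu, hCu0, hCu⟩ := periodic_bound hucont hup
  obtain ⟨Cv, hCv0, hCv⟩ := periodic_bound hvcont hvp
  obtain ⟨Cu', hCu'0, hCu'⟩ := periodic_bound hu' hup'
  obtain ⟨Cv', hCv'0, hCv'⟩ := periodic_bound hv' hvp'
  have hconjv : Continuous fun x => (starRingEnd ℂ) (v x) :=
    Complex.continuous_conj.comp hvcont
  have hconjv' : Continuous fun x => (starRingEnd ℂ) (v' x) :=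
    Complex.continuous_conj.comp hv'
  have hCconjv : ∀ x, ‖(starRingEnd ℂ) (v x)‖ ≤ Cv := fun x => by
    rw [RCLike.norm_conj]; exact hCv x
  have hCconjv' : ∀ x, ‖(starRingEnd ℂ) (v' x)‖ ≤ Cv' := fun x => by
    rw [RCLike.norm_conj]; exact hCv' x
  have hconjvp : Function.Periodic (fun x => (starRingEnd ℂ) (v x)) (2 * π) :=
    fun x => by simp [hvp x]
  have hconjvp' : Function.Periodic (fun x => (starRingEnd ℂ) (v' x)) (2 * π) :=
    fun x => by simp [hvp' x]
  -- the two target quantities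
  set T1 : ℂ := ∫ ξ : ℝ, (K ξ : ℂ) *
    ∫ θ in (0:ℝ)..(2 * π), u (θ + k * ξ) * (starRingEnd ℂ) (v θ) with hT1
  set T2 : ℂ := ∫ ξ : ℝ, ((ξ * K ξ : ℝ) : ℂ) *
    ∫ θ in (0:ℝ)..(2 * π), u' (θ + k * ξ) * (starRingEnd ℂ) (v θ) with hT2
  -- continuity of the convolution integrals
  have hcontA : Continuous fun θ : ℝ => ∫ ξ : ℝ, (K ξ : ℂ) * v (θ - k * ξ) :=
    cont_aux K hK v hvcont Cv hCv k
  have hcontB : Continuous fun θ : ℝ => ∫ ξ : ℝ, ((ξ * K ξ : ℝ) : ℂ) * v' (θ - k * ξ) :=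
    cont_aux (fun ξ => ξ * K ξ) hK1 v' hv' Cv' hCv' k
  have hcontA' : Continuous fun θ : ℝ => ∫ ξ : ℝ, (K ξ : ℂ) * u (θ - k * ξ) :=
    cont_aux K hK u hucont Cu hCu k
  have hcontB' : Continuous fun θ : ℝ => ∫ ξ : ℝ, ((ξ * K ξ : ℝ) : ℂ) * u' (θ - k * ξ) :=
    cont_aux (fun ξ => ξ * K ξ) hK1 u' hu' Cu' hCu' k
  -- First term of LHS
  have term1L : (∫ θ in (0:ℝ)..(2 * π),
      u θ * (starRingEnd ℂ) (∫ ξ : ℝ, (K ξ : ℂ) * v (θ - k * ξ))) = T1 := by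
    have e1 : ∀ θ : ℝ, u θ * (starRingEnd ℂ) (∫ ξ : ℝ, (K ξ : ℂ) * v (θ - k * ξ))
        = ∫ ξ : ℝ, (K ξ : ℂ) * (u θ * (starRingEnd ℂ) (v (θ - k * ξ))) := by
      intro θ
      rw [← integral_conj, ← MeasureTheory.integral_const_mul]
      congr 1
      funext ξ
      simp only [map_mul, Complex.conj_ofReal]
      ring
    calc (∫ θ in (0:ℝ)..(2 * π),
          u θ * (starRingEnd ℂ) (∫ ξ : ℝ, (K ξ : ℂ) * v (θ - k * ξ)))
        = ∫ θ in (0:ℝ)..(2 * π),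
            ∫ ξ : ℝ, (K ξ : ℂ) * (u θ * (starRingEnd ℂ) (v (θ - k * ξ))) := by
          exact intervalIntegral.integral_congr fun θ _ => e1 θ
      _ = ∫ ξ : ℝ, (K ξ : ℂ) *
            ∫ θ in (0:ℝ)..(2 * π), u θ * (starRingEnd ℂ) (v (θ - k * ξ)) :=
          swap_aux K hK u (fun x => (starRingEnd ℂ) (v x)) hucont hconjv
            Cu Cv hCu0 hCv0 hCu hCconjv k
      _ = T1 := by
          rw [hT1]
          congr 1
          funext ξ
          congr 1
          exact shift_aux u (fun x => (starRingEnd ℂ) (v x)) hup hconjvp (k * ξ)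
  -- Second term of LHS
  have term2L : (∫ θ in (0:ℝ)..(2 * π),
      u θ * (starRingEnd ℂ) (∫ ξ : ℝ, ((ξ * K ξ : ℝ) : ℂ) * v' (θ - k * ξ))) = -T2 := by
    have e1 : ∀ θ : ℝ, u θ * (starRingEnd ℂ) (∫ ξ : ℝ, ((ξ * K ξ : ℝ) : ℂ) * v' (θ - k * ξ))
        = ∫ ξ : ℝ, ((ξ * K ξ : ℝ) : ℂ) * (u θ * (starRingEnd ℂ) (v' (θ - k * ξ))) := by
      intro θ
      rw [← integral_conj, ← MeasureTheory.integral_const_mul]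
      congr 1
      funext ξ
      simp only [map_mul, Complex.conj_ofReal]
      ring
    calc (∫ θ in (0:ℝ)..(2 * π),
          u θ * (starRingEnd ℂ) (∫ ξ : ℝ, ((ξ * K ξ : ℝ) : ℂ) * v' (θ - k * ξ)))
        = ∫ θ in (0:ℝ)..(2 * π),
            ∫ ξ : ℝ, ((ξ * K ξ : ℝ) : ℂ) * (u θ * (starRingEnd ℂ) (v' (θ - k * ξ))) :=
          intervalIntegral.integral_congr fun θ _ => e1 θ
      _ = ∫ ξ : ℝ, ((ξ * K ξ : ℝ) : ℂ) *
            ∫ θ in (0:ℝ)..(2 * π), u θ * (starRingEnd ℂ) (v' (θ - k * ξ)) :=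
          swap_aux (fun ξ => ξ * K ξ) hK1 u (fun x => (starRingEnd ℂ) (v' x)) hucont hconjv'
            Cu Cv' hCu0 hCv'0 hCu hCconjv' k
      _ = ∫ ξ : ℝ, ((ξ * K ξ : ℝ) : ℂ) *
            -∫ θ in (0:ℝ)..(2 * π), u' (θ + k * ξ) * (starRingEnd ℂ) (v θ) := by
          congr 1
          funext ξ
          congr 1
          rw [shift_aux u (fun x => (starRingEnd ℂ) (v' x)) hup hconjvp' (k * ξ)]
          exact ibp_aux (fun θ => u (θ + k * ξ)) (fun x => (starRingEnd ℂ) (v x))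
            (fun θ => u' (θ + k * ξ)) (fun x => (starRingEnd ℂ) (v' x))
            (fun x => HasDerivAt.comp_add_const x (k * ξ) (hu (x + k * ξ)))
            (fun x => (hv x).star)
            (hu'.comp (continuous_id.add continuous_const)) hconjv'
            (fun x => by simp only [add_right_comm x (2 * π) (k * ξ)]; exact hup (x + k * ξ))
            hconjvp
      _ = -T2 := by
          rw [hT2, ← MeasureTheory.integral_neg]
          congr 1
          funext ξ
          rw [mul_neg]
  -- First term of RHS
  have term1R : (∫ θ in (0:ℝ)..(2 * π),
      (∫ ξ : ℝ, (K ξ : ℂ) * u (θ - k * ξ)) * (starRingEnd ℂ) (v θ)) = T1 := by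
    have e1 : ∀ θ : ℝ, (∫ ξ : ℝ, (K ξ : ℂ) * u (θ - k * ξ)) * (starRingEnd ℂ) (v θ)
        = ∫ ξ : ℝ, (K ξ : ℂ) * ((starRingEnd ℂ) (v θ) * u (θ - k * ξ)) := by
      intro θ
      rw [← MeasureTheory.integral_mul_const]
      congr 1
      funext ξ
      ring
    calc (∫ θ in (0:ℝ)..(2 * π),
          (∫ ξ : ℝ, (K ξ : ℂ) * u (θ - k * ξ)) * (starRingEnd ℂ) (v θ))
        = ∫ θ in (0:ℝ)..(2 * π),
            ∫ ξ : ℝ, (K ξ : ℂ) * ((starRingEnd ℂ) (v θ) * u (θ - k * ξ)) :=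
          intervalIntegral.integral_congr fun θ _ => e1 θ
      _ = ∫ ξ : ℝ, (K ξ : ℂ) *
            ∫ θ in (0:ℝ)..(2 * π), (starRingEnd ℂ) (v θ) * u (θ - k * ξ) :=
          swap_aux K hK (fun x => (starRingEnd ℂ) (v x)) u hconjv hucont
            Cv Cu hCv0 hCu0 hCconjv hCu k
      _ = T1 := by
          rw [hT1, ← MeasureTheory.integral_neg_eq_self
            (fun ξ : ℝ => (K ξ : ℂ) *
              ∫ θ in (0:ℝ)..(2 * π), (starRingEnd ℂ) (v θ) * u (θ - k * ξ)) volume]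
          congr 1
          funext ξ
          rw [hKeven]
          congr 1
          refine intervalIntegral.integral_congr fun θ _ => ?_
          rw [mul_neg, sub_neg_eq_add]
          ring
  -- Second term of RHS
  have term2R : (∫ θ in (0:ℝ)..(2 * π),
      (∫ ξ : ℝ, ((ξ * K ξ : ℝ) : ℂ) * u' (θ - k * ξ)) * (starRingEnd ℂ) (v θ)) = -T2 := by
    have e1 : ∀ θ : ℝ, (∫ ξ : ℝ, ((ξ * K ξ : ℝ) : ℂ) * u' (θ - k * ξ)) * (starRingEnd ℂ) (v θ)
        = ∫ ξ : ℝ, ((ξ * K ξ : ℝ) : ℂ) * ((starRingEnd ℂ) (v θ) * u' (θ - k * ξ)) := by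
      intro θ
      rw [← MeasureTheory.integral_mul_const]
      congr 1
      funext ξ
      ring
    calc (∫ θ in (0:ℝ)..(2 * π),
          (∫ ξ : ℝ, ((ξ * K ξ : ℝ) : ℂ) * u' (θ - k * ξ)) * (starRingEnd ℂ) (v θ))
        = ∫ θ in (0:ℝ)..(2 * π),
            ∫ ξ : ℝ, ((ξ * K ξ : ℝ) : ℂ) * ((starRingEnd ℂ) (v θ) * u' (θ - k * ξ)) :=
          intervalIntegral.integral_congr fun θ _ => e1 θ
      _ = ∫ ξ : ℝ, ((ξ * K ξ : ℝ) : ℂ) *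
            ∫ θ in (0:ℝ)..(2 * π), (starRingEnd ℂ) (v θ) * u' (θ - k * ξ) :=
          swap_aux (fun ξ => ξ * K ξ) hK1 (fun x => (starRingEnd ℂ) (v x)) u' hconjv hu'
            Cv Cu' hCv0 hCu'0 hCconjv hCu' k
      _ = -T2 := by
          rw [hT2, ← MeasureTheory.integral_neg_eq_self
            (fun ξ : ℝ => ((ξ * K ξ : ℝ) : ℂ) *
              ∫ θ in (0:ℝ)..(2 * π), (starRingEnd ℂ) (v θ) * u' (θ - k * ξ)) volume,
            ← MeasureTheory.integral_neg]
          congr 1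
          funext ξ
          rw [hKeven]
          have harg : (∫ θ in (0:ℝ)..(2 * π), (starRingEnd ℂ) (v θ) * u' (θ - k * -ξ))
              = ∫ θ in (0:ℝ)..(2 * π), u' (θ + k * ξ) * (starRingEnd ℂ) (v θ) := by
            refine intervalIntegral.integral_congr fun θ _ => ?_
            rw [mul_neg, sub_neg_eq_add]
            ring
          rw [harg]
          push_cast
          ring
  -- assemble
  have hLsplit : (∫ θ in (0:ℝ)..(2 * π),
      u θ * (starRingEnd ℂ)
        ((∫ ξ : ℝ, (K ξ : ℂ) * v (θ - k * ξ))
          - k * ∫ ξ : ℝ, ((ξ * K ξ : ℝ) : ℂ) * v' (θ - k * ξ)))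
      = (∫ θ in (0:ℝ)..(2 * π),
          u θ * (starRingEnd ℂ) (∫ ξ : ℝ, (K ξ : ℂ) * v (θ - k * ξ)))
        - (k : ℂ) * ∫ θ in (0:ℝ)..(2 * π),
            u θ * (starRingEnd ℂ) (∫ ξ : ℝ, ((ξ * K ξ : ℝ) : ℂ) * v' (θ - k * ξ)) := by
    rw [← intervalIntegral.integral_const_mul, ← intervalIntegral.integral_sub]
    · refine intervalIntegral.integral_congr fun θ _ => ?_
      simp only [map_sub, map_mul, Complex.conj_ofReal]
      ring
    · exact (hucont.mul (Complex.continuous_conj.comp hcontA)).intervalIntegrable _ _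
    · exact (continuous_const.mul
        (hucont.mul (Complex.continuous_conj.comp hcontB))).intervalIntegrable _ _
  have hRsplit : (∫ θ in (0:ℝ)..(2 * π),
      ((∫ ξ : ℝ, (K ξ : ℂ) * u (θ - k * ξ))
        - k * ∫ ξ : ℝ, ((ξ * K ξ : ℝ) : ℂ) * u' (θ - k * ξ)) * (starRingEnd ℂ) (v θ))
      = (∫ θ in (0:ℝ)..(2 * π),
          (∫ ξ : ℝ, (K ξ : ℂ) * u (θ - k * ξ)) * (starRingEnd ℂ) (v θ))
        - (k : ℂ) * ∫ θ in (0:ℝ)..(2 * π),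
            (∫ ξ : ℝ, ((ξ * K ξ : ℝ) : ℂ) * u' (θ - k * ξ)) * (starRingEnd ℂ) (v θ) := by
    rw [← intervalIntegral.integral_const_mul, ← intervalIntegral.integral_sub]
    · refine intervalIntegral.integral_congr fun θ _ => ?_
      ring
    · exact (hcontA'.mul hconjv).intervalIntegrable _ _
    · exact (continuous_const.mul (hcontB'.mul hconjv)).intervalIntegrable _ _
  rw [hLsplit, hRsplit, term1L, term2L, term1R, term2R]
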